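/- For every integer n ≥ 1, let Z_n := ({0, 8, …, 8n} × {0}) ∪ ({4, 12, …, 8n−4} × {4}) ⊆ ℝ × [0,4], equipped with the l¹ metric. If f : Z_n → ℝ is an ε-roughly isometric map, then ε ≥ 8n/(2n+1). -/

import Mathlib

open Metric Set
open scoped ENNReal

/-- `f` is `ε`-roughly isometric: `|d(f x, f x') − d(x, x')| ≤ ε` for all `x, x'`. -/
def RoughIsom {X Y : Type} [MetricSpace X] [MetricSpace Y] (ε : ℝ) (f : X → Y) : Prop :=
  ∀ x x' : X, |dist (f x) (f x') - dist x x'| ≤ ε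

/-- The plane with the `l¹` metric, `d((s,t),(s',t')) = |s−s'| + |t−t'|`. -/
abbrev L1Plane : Type := WithLp 1 (ℝ × ℝ)

/-- The `(2n+1)`-point set `Z_n = ({0,8,…,8n} × {0}) ∪ ({4,12,…,8n−4} × {4})`
in the `l¹` plane. -/
def Zn (n : ℕ) : Set L1Plane :=
  {p | ∃ k : ℕ, k ≤ n ∧ p = (WithLp.equiv 1 (ℝ × ℝ)).symm (8 * (k : ℝ), 0)} ∪
  {p | ∃ k : ℕ, 1 ≤ k ∧ k ≤ n ∧ p = (WithLp.equiv 1 (ℝ × ℝ)).symm (8 * (k : ℝ) - 4, 4)}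

namespace RoughAux

/-- The `i`-th point of `Z_n` in zigzag order: `(4i, 0)` for even `i`, `(4i, 4)` for odd `i`. -/
def pt (i : ℕ) : L1Plane :=
  (WithLp.equiv 1 (ℝ × ℝ)).symm (4 * (i : ℝ), if Even i then 0 else 4)

lemma pt_mem (n i : ℕ) (hi : i ≤ 2 * n) : pt i ∈ Zn n := by
  rcases Nat.even_or_odd i with ⟨k, hk⟩ | ⟨k, hk⟩
  · left
    refine ⟨k, by omega, ?_⟩
    have he : Even (k + k) := ⟨k, rfl⟩
    simp only [pt, hk, if_pos he]
    congr 1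
    rw [Prod.mk.injEq]
    refine ⟨by push_cast; ring, rfl⟩
  · right
    refine ⟨k + 1, by omega, by omega, ?_⟩
    have ho : ¬ Even (2 * k + 1) := by simp [Nat.even_iff]
    simp only [pt, hk, if_neg ho]
    congr 1
    rw [Prod.mk.injEq]
    refine ⟨by push_cast; ring, rfl⟩

lemma dist_pt (i j : ℕ) : dist (pt i) (pt j) =
    |4 * (i : ℝ) - 4 * j| + |(if Even i then (0:ℝ) else 4) - (if Even j then (0:ℝ) else 4)| := by
  rw [WithLp.prod_dist_eq_add (by norm_num : 0 < (1:ℝ≥0∞).toReal)]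
  simp only [pt, WithLp.equiv_symm_apply, WithLp.toLp_fst, WithLp.toLp_snd, ENNReal.toReal_one,
    Real.rpow_one, Real.dist_eq, one_div_one, Real.rpow_natCast, pow_one]

lemma dist_pt_ge (i j : ℕ) (hij : i ≠ j) : 8 ≤ dist (pt i) (pt j) := by
  rw [dist_pt]
  by_cases h : Even i ↔ Even j
  · -- same parity: |i - j| ≥ 2
    have h2 : i + 2 ≤ j ∨ j + 2 ≤ i := by
      rw [Nat.even_iff, Nat.even_iff] at h
      omega
    have h8 : (8:ℝ) ≤ |4 * (i:ℝ) - 4 * j| := by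
      rcases h2 with h2 | h2
      · have : (i:ℝ) + 2 ≤ j := by exact_mod_cast h2
        rw [abs_sub_comm, abs_of_nonneg (by linarith)]; linarith
      · have : (j:ℝ) + 2 ≤ i := by exact_mod_cast h2
        rw [abs_of_nonneg (by linarith)]; linarith
    have : (0:ℝ) ≤ |(if Even i then (0:ℝ) else 4) - (if Even j then (0:ℝ) else 4)| := abs_nonneg _
    linarith
  · -- different parity
    have h1 : i + 1 ≤ j ∨ j + 1 ≤ i := by omega
    have h4 : (4:ℝ) ≤ |4 * (i:ℝ) - 4 * j| := by
      rcases h1 with h1 | h1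
      · have : (i:ℝ) + 1 ≤ j := by exact_mod_cast h1
        rw [abs_sub_comm, abs_of_nonneg (by linarith)]; linarith
      · have : (j:ℝ) + 1 ≤ i := by exact_mod_cast h1
        rw [abs_of_nonneg (by linarith)]; linarith
    have h4' : |(if Even i then (0:ℝ) else 4) - (if Even j then (0:ℝ) else 4)| = 4 := by
      rcases Classical.em (Even i) with hi | hi <;> rcases Classical.em (Even j) with hj | hj
      · exact absurd (iff_of_true hi hj) h
      · simp [hi, hj]
      · simp [hi, hj]
      · exact absurd (iff_of_false hi hj) h
    linarith
  

lemma dist_pt_le (n i j : ℕ) (hi : i ≤ 2 * n) (hj : j ≤ 2 * n) :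
    dist (pt i) (pt j) ≤ 8 * n := by
  rw [dist_pt]
  by_cases h : Even i ↔ Even j
  · have h0 : |(if Even i then (0:ℝ) else 4) - (if Even j then (0:ℝ) else 4)| = 0 := by
      rcases Classical.em (Even i) with hi' | hi'
      · simp [hi', h.mp hi']
      · have : ¬ Even j := fun hj' => hi' (h.mpr hj')
        simp [hi', this]
    have : |4 * (i:ℝ) - 4 * j| ≤ 8 * n := by
      rw [abs_sub_le_iff]
      constructor <;>
      · have hi' : (i:ℝ) ≤ 2 * n := by exact_mod_cast hi
        have hj' : (j:ℝ) ≤ 2 * n := by exact_mod_cast hj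
        have : (0:ℝ) ≤ i := Nat.cast_nonneg i
        have : (0:ℝ) ≤ j := Nat.cast_nonneg j
        linarith
    linarith
  · -- different parity: |i - j| ≤ 2n - 1
    have hne : i % 2 ≠ j % 2 := by
      rw [Nat.even_iff, Nat.even_iff] at h; omega
    have hd : i + (2 * n - 1) ≥ j ∧ j + (2 * n - 1) ≥ i := by omega
    have h1 : |4 * (i:ℝ) - 4 * j| ≤ 8 * n - 4 := by
      rw [abs_sub_le_iff]
      have hij : (i:ℝ) - j ≤ 2 * n - 1 := by
        have : (i:ℕ) ≤ j + (2 * n - 1) := hd.2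
        have h2n : (1:ℕ) ≤ 2 * n := by omega
        have := (Nat.cast_le (α := ℝ)).mpr this
        push_cast [h2n] at this
        linarith
      have hji : (j:ℝ) - i ≤ 2 * n - 1 := by
        have : (j:ℕ) ≤ i + (2 * n - 1) := hd.1
        have h2n : (1:ℕ) ≤ 2 * n := by omega
        have := (Nat.cast_le (α := ℝ)).mpr this
        push_cast [h2n] at this
        linarith
      constructor <;> linarith
    have h2 : |(if Even i then (0:ℝ) else 4) - (if Even j then (0:ℝ) else 4)| ≤ 4 := by
      rcases Classical.em (Even i) with hi' | hi' <;> rcases Classical.em (Even j) with hj' | hj' <;>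
        simp [hi', hj']
    linarith

end RoughAux

/-- Any `ε`-roughly isometric map `f : Z_n → ℝ` has `ε ≥ 8n/(2n+1)`. -/
theorem roughIsom_Zn_lower_bound (n : ℕ) (hn : 1 ≤ n) (ε : ℝ) (f : Zn n → ℝ)
    (hf : RoughIsom ε f) : 8 * (n : ℝ) / (2 * (n : ℝ) + 1) ≤ ε := by
  classical
  set N := 2 * n with hN
  have hN1 : 0 < N := by omega
  -- points of Zn n indexed by Fin (N+1)
  let P : Fin (N + 1) → Zn n := fun i => ⟨RoughAux.pt i.val, RoughAux.pt_mem n i.val (by omega)⟩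
  let F : Fin (N + 1) → ℝ := fun i => f (P i)
  let σ := Tuple.sort F
  have hmono : Monotone (F ∘ σ) := Tuple.monotone_sort F
  let ix : ℕ → Fin (N + 1) := fun m => ⟨min m N, by omega⟩
  let G : ℕ → ℝ := fun m => F (σ (ix m))
  -- lower bound on f-distances
  have hlow : ∀ x x' : Zn n, dist x.val x'.val - ε ≤ dist (f x) (f x') := by
    intro x x'
    have h := (abs_le.mp (hf x x')).1
    rw [Subtype.dist_eq] at h
    linarith
  have hhigh : ∀ x x' : Zn n, dist (f x) (f x') ≤ dist x.val x'.val + ε := by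
    intro x x'
    have h := (abs_le.mp (hf x x')).2
    rw [Subtype.dist_eq] at h
    linarith
  have key : ∀ m, m < N → 8 - ε ≤ G (m + 1) - G m := by
    intro m hm
    have hvals : (ix m).val ≠ (ix (m + 1)).val := by
      show min m N ≠ min (m + 1) N
      omega
    have hixne : ix m ≠ ix (m + 1) := fun h => hvals (congrArg Fin.val h)
    have hne : (σ (ix m)).val ≠ (σ (ix (m + 1))).val := by
      intro h
      exact hixne (σ.injective (Fin.ext h))
    have hd8 : (8:ℝ) ≤ dist (P (σ (ix (m+1)))).val (P (σ (ix m))).val :=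
      RoughAux.dist_pt_ge _ _ (fun h => hne (h.symm))
    have hmle : G m ≤ G (m + 1) :=
      hmono (show (⟨min m N, by omega⟩ : Fin (N + 1)) ≤ ⟨min (m + 1) N, by omega⟩ from
        Fin.mk_le_mk.mpr (by omega))
    have h1 : dist (P (σ (ix (m+1)))).val (P (σ (ix m))).val - ε ≤
        dist (f (P (σ (ix (m+1))))) (f (P (σ (ix m)))) := hlow _ _
    have h2 : dist (f (P (σ (ix (m+1))))) (f (P (σ (ix m)))) = G (m+1) - G m := by
      rw [Real.dist_eq, abs_of_nonneg (by simpa [G, F] using sub_nonneg.mpr hmle)]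
    linarith
  have tele : ∑ m ∈ Finset.range N, (G (m + 1) - G m) = G N - G 0 :=
    Finset.sum_range_sub G N
  have lower : (N : ℝ) * (8 - ε) ≤ G N - G 0 := by
    rw [← tele]
    calc (N : ℝ) * (8 - ε) = ∑ _m ∈ Finset.range N, (8 - ε) := by
          rw [Finset.sum_const, Finset.card_range, nsmul_eq_mul]
      _ ≤ ∑ m ∈ Finset.range N, (G (m + 1) - G m) :=
          Finset.sum_le_sum (fun m hm => key m (Finset.mem_range.mp hm))
  have upper : G N - G 0 ≤ 8 * n + ε := by
    have h1 : dist (f (P (σ (ix N)))) (f (P (σ (ix 0)))) ≤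
        dist (P (σ (ix N))).val (P (σ (ix 0))).val + ε := hhigh _ _
    have h2 : dist (P (σ (ix N))).val (P (σ (ix 0))).val ≤ 8 * n :=
      RoughAux.dist_pt_le n _ _ (by omega) (by omega)
    have h3 : G N - G 0 ≤ dist (G N) (G 0) := by
      rw [Real.dist_eq]; exact le_abs_self _
    have : dist (G N) (G 0) = dist (f (P (σ (ix N)))) (f (P (σ (ix 0)))) := rfl
    linarith
  have hNr : (N : ℝ) = 2 * n := by push_cast [hN]; ring
  have hpos : (0:ℝ) < 2 * n + 1 := by positivity
  rw [div_le_iff₀ hpos]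
  have hn1 : (1:ℝ) ≤ n := by exact_mod_cast hn
  nlinarith [lower, upper, hNr]
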